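/- For every positive integer n, sg(K_{n,m}) ≥ k implies: there is no pair of nonnegative integers (s₁,s₂) with s₁ ≤ n, s₂ ≤ m, s₁ + s₂ < k, C(s₂,2) ≥ n − s₁, and C(s₁,2) ≥ m − s₂. Conversely, sg(K_{n,m}) equals the minimum of s₁ + s₂ over all such feasible pairs (s₁,s₂), provided n, m ≥ 1 and (n,m) ∉ {(1,1),(2,2)}. -/

import Mathlib

/-- A selection of fixed geodesics between pairs of vertices of `S`:
each element of `P` is a walk whose endpoints lie in `S`, which is a shortest path,
with at most one walk per ordered pair of endpoints, and with the walks chosen for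
the two orderings of a pair being reverses of each other. -/
def IsGeodesicSelection {V : Type*} (G : SimpleGraph V) (S : Set V)
    (P : Set ((u : V) × (v : V) × G.Walk u v)) : Prop :=
  (∀ q ∈ P, q.1 ∈ S ∧ q.2.1 ∈ S ∧ q.2.2.IsPath ∧ q.2.2.length = G.dist q.1 q.2.1) ∧
  (∀ q ∈ P, ∀ q' ∈ P,
    (q.1 = q'.1 ∧ q.2.1 = q'.2.1 → q = q') ∧
    (q.1 = q'.2.1 ∧ q.2.1 = q'.1 → q.2.2.support = q'.2.2.support.reverse))

/-- `S` is a strong geodetic set of `G` if one can fix one shortest path between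
each pair of vertices of `S` so that all vertices of `G` are covered. -/
def IsStrongGeodeticSet {V : Type*} (G : SimpleGraph V) (S : Set V) : Prop :=
  ∃ P, IsGeodesicSelection G S P ∧ ∀ w : V, ∃ q ∈ P, w ∈ q.2.2.support

/-- The strong geodetic number: minimum size of a strong geodetic set. -/
noncomputable def strongGeodeticNumber {V : Type*} (G : SimpleGraph V) : ℕ :=
  sInf {k | ∃ S : Set V, S.ncard = k ∧ IsStrongGeodeticSet G S}

open SimpleGraph Sum Finset



lemma walk_support_cases {V : Type*} {G : SimpleGraph V} {u v : V} (p : G.Walk u v)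
    (h : p.length ≤ 2) :
    p.support = [u] ∨ p.support = [u, v] ∨
      ∃ x, p.support = [u, x, v] ∧ G.Adj u x ∧ G.Adj x v := by
  cases p with
  | nil => left; rfl
  | cons h1 q =>
    cases q with
    | nil => right; left; rfl
    | cons h2 r =>
      cases r with
      | nil => right; right; exact ⟨_, rfl, h1, h2⟩
      | cons h3 s => simp [Walk.length_cons] at h

lemma pair_cases {β : Type*} [DecidableEq β] (x y z w : β) (hxy : x ≠ y) (hzw : z ≠ w)
    (h : ({x, y} : Finset β) = {z, w}) : (x = z ∧ y = w) ∨ (x = w ∧ y = z) := by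
  have hz : z ∈ ({x, y} : Finset β) := by rw [h]; simp
  have hw : w ∈ ({x, y} : Finset β) := by rw [h]; simp
  simp only [Finset.mem_insert, Finset.mem_singleton] at hz hw
  rcases hz with rfl | rfl <;> rcases hw with rfl | rfl
  · exact absurd rfl hzw
  · exact Or.inl ⟨rfl, rfl⟩
  · exact Or.inr ⟨rfl, rfl⟩
  · exact absurd rfl hzw

lemma card_filter_lt_fin {n s : ℕ} (hs : s ≤ n) :
    (Finset.univ.filter (fun i : Fin n => (i : ℕ) < s)).card = s := by
  have : (Finset.univ.filter (fun i : Fin n => (i : ℕ) < s)) =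
      (Finset.range s).attachFin (fun m hm => lt_of_lt_of_le (Finset.mem_range.mp hm) hs) := by
    ext a; simp [Finset.mem_attachFin]
  rw [this, Finset.card_attachFin, Finset.card_range]

lemma card_filter_le_fin {n s : ℕ} (hs : s ≤ n) :
    (Finset.univ.filter (fun i : Fin n => s ≤ (i : ℕ))).card = n - s := by
  classical
  have h : (Finset.univ.filter (fun i : Fin n => s ≤ (i : ℕ))) =
      Finset.univ \ (Finset.univ.filter (fun i : Fin n => (i : ℕ) < s)) := by
    ext a; simp
  rw [h, Finset.card_sdiff_of_subset (Finset.filter_subset _ _)]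
  rw [card_filter_lt_fin hs, Finset.card_univ, Fintype.card_fin]

lemma pairsel {α β : Type*} [Fintype α] [LinearOrder β] (s : Finset β)
    (h : Fintype.card α ≤ s.card.choose 2) :
    ∃ a b : α → β, (∀ i, a i < b i ∧ a i ∈ s ∧ b i ∈ s) ∧
      ∀ i i', a i = a i' → b i = b i' → i = i' := by
  classical
  have hcard : Fintype.card α ≤ Fintype.card {t // t ∈ s.powersetCard 2} := by
    rwa [Fintype.card_coe, Finset.card_powersetCard]
  obtain ⟨f⟩ := Function.Embedding.nonempty_of_card_le hcard
  have hcard2 : ∀ i : α, ((f i : Finset β)).card = 2 := fun i =>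
    (Finset.mem_powersetCard.mp (f i).2).2
  have hne : ∀ i : α, ((f i : Finset β)).Nonempty := by
    intro i; rw [← Finset.card_pos, hcard2]; norm_num
  have hsub : ∀ i : α, ((f i : Finset β)) ⊆ s := fun i =>
    (Finset.mem_powersetCard.mp (f i).2).1
  have key : ∀ j : α, (f j : Finset β) =
      {((f j : Finset β)).min' (hne j), ((f j : Finset β)).max' (hne j)} := by
    intro j
    refine (Finset.eq_of_subset_of_card_le ?_ ?_)
    · intro x hx
      rcases Finset.card_eq_two.mp (hcard2 j) with ⟨p, q, hpq, hset⟩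
      have hmin := Finset.min'_mem (f j : Finset β) (hne j)
      have hmax := Finset.max'_mem (f j : Finset β) (hne j)
      have hlt : ((f j : Finset β)).min' (hne j) ≠ ((f j : Finset β)).max' (hne j) :=
        (Finset.min'_lt_max'_of_card _ (by rw [hcard2]; norm_num)).ne
      rw [hset] at hx
      have hmin2 : ((f j : Finset β)).min' (hne j) ∈ ({p, q} : Finset β) := by
        rw [← hset]; exact hmin
      have hmax2 : ((f j : Finset β)).max' (hne j) ∈ ({p, q} : Finset β) := by
        rw [← hset]; exact hmax
      simp only [Finset.mem_insert, Finset.mem_singleton] at hx hmin2 hmax2 ⊢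
      rcases hmin2 with h1 | h1 <;> rcases hmax2 with h2 | h2 <;> rcases hx with rfl | rfl <;>
        simp_all
    · rw [hcard2]
      exact le_trans (Finset.card_insert_le _ _) (by simp)
  refine ⟨fun i => ((f i : Finset β)).min' (hne i), fun i => ((f i : Finset β)).max' (hne i),
    fun i => ⟨?_, ?_, ?_⟩, ?_⟩
  · exact Finset.min'_lt_max'_of_card _ (by rw [hcard2]; norm_num)
  · exact hsub i (Finset.min'_mem _ _)
  · exact hsub i (Finset.max'_mem _ _)
  · intro i i' h1 h2
    dsimp only at h1 h2
    apply f.injective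
    apply Subtype.ext
    rw [key i, key i', h1, h2]


section main

variable {n m : ℕ}

local notation "G" => completeBipartiteGraph (Fin n) (Fin m)


lemma adj_lr (i : Fin n) (j : Fin m) : (G).Adj (inl i) (inr j) := by simp

lemma adj_rl (j : Fin m) (i : Fin n) : (G).Adj (inr j) (inl i) := by simp

lemma not_adj_ll (i i' : Fin n) : ¬ (G).Adj (inl i) (inl i') := by simp

lemma not_adj_rr (j j' : Fin m) : ¬ (G).Adj (inr j) (inr j') := by simp

lemma dist_le_two (hn : 0 < n) (hm : 0 < m) (u v : Fin n ⊕ Fin m) :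
    (G).dist u v ≤ 2 := by
  cases u with
  | inl i => cases v with
    | inl i' =>
      exact (SimpleGraph.dist_le ((Walk.nil.cons (adj_rl ⟨0, hm⟩ i')).cons (adj_lr i ⟨0, hm⟩)))
    | inr j =>
      exact le_trans (SimpleGraph.dist_le ((adj_lr i j).toWalk)) (by norm_num)
  | inr j => cases v with
    | inl i =>
      exact le_trans (SimpleGraph.dist_le ((adj_rl j i).toWalk)) (by norm_num)
    | inr j' =>
      exact (SimpleGraph.dist_le ((Walk.nil.cons (adj_lr ⟨0, hn⟩ j')).cons (adj_rl j ⟨0, hn⟩)))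

lemma dist_rr (hn : 0 < n) (hm : 0 < m) {a b : Fin m} (hab : a ≠ b) :
    (G).dist (inr a) (inr b) = 2 := by
  have h2 := dist_le_two hn hm (inr a) (inr b)
  have h0 : (G).dist (inr a) (inr b) ≠ 0 := by
    intro h
    rcases SimpleGraph.dist_eq_zero_iff_eq_or_not_reachable.mp h with h | h
    · exact hab (inr_injective h)
    · exact h ⟨(Walk.nil.cons (adj_lr ⟨0, hn⟩ b)).cons (adj_rl a ⟨0, hn⟩)⟩
  have h1 : (G).dist (inr a) (inr b) ≠ 1 := by
    intro h
    exact not_adj_rr a b (SimpleGraph.dist_eq_one_iff_adj.mp h)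
  omega

lemma dist_ll (hn : 0 < n) (hm : 0 < m) {a b : Fin n} (hab : a ≠ b) :
    (G).dist (inl a) (inl b) = 2 := by
  have h2 := dist_le_two hn hm (inl a) (inl b)
  have h0 : (G).dist (inl a) (inl b) ≠ 0 := by
    intro h
    rcases SimpleGraph.dist_eq_zero_iff_eq_or_not_reachable.mp h with h | h
    · exact hab (inl_injective h)
    · exact h ⟨(Walk.nil.cons (adj_rl ⟨0, hm⟩ b)).cons (adj_lr a ⟨0, hm⟩)⟩
  have h1 : (G).dist (inl a) (inl b) ≠ 1 := by
    intro h
    exact not_adj_ll a b (SimpleGraph.dist_eq_one_iff_adj.mp h)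
  omega

lemma exists_sgs (hn : 0 < n) (hm : 0 < m) {s₁ s₂ : ℕ} (hs₁ : s₁ ≤ n) (hs₂ : s₂ ≤ m)
    (h1 : n - s₁ ≤ s₂.choose 2) (h2 : m - s₂ ≤ s₁.choose 2) :
    ∃ S : Set (Fin n ⊕ Fin m), S.ncard = s₁ + s₂ ∧ IsStrongGeodeticSet G S := by
  classical
  set F₁ : Finset (Fin n) := Finset.univ.filter (fun i => (i : ℕ) < s₁) with hF₁
  set F₂ : Finset (Fin m) := Finset.univ.filter (fun j => (j : ℕ) < s₂) with hF₂
  set Fs : Finset (Fin n ⊕ Fin m) := F₁.image inl ∪ F₂.image inr with hFs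
  refine ⟨(Fs : Set (Fin n ⊕ Fin m)), ?_, ?_⟩
  · rw [Set.ncard_coe_finset, Finset.card_union_of_disjoint, Finset.card_image_of_injective _ inl_injective,
      Finset.card_image_of_injective _ inr_injective, card_filter_lt_fin hs₁, card_filter_lt_fin hs₂]
    rw [Finset.disjoint_left]
    rintro x hx hx'
    simp only [Finset.mem_image] at hx hx'
    obtain ⟨i, -, rfl⟩ := hx
    obtain ⟨j, -, h⟩ := hx'
    exact (inr_ne_inl h)
  · -- strong geodetic
    have hcard1 : Fintype.card {i : Fin n // s₁ ≤ (i : ℕ)} ≤ s₂.choose 2 := by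
      rw [Fintype.card_subtype]
      rw [card_filter_le_fin hs₁]; exact h1
    have hcard2 : Fintype.card {j : Fin m // s₂ ≤ (j : ℕ)} ≤ s₁.choose 2 := by
      rw [Fintype.card_subtype]
      rw [card_filter_le_fin hs₂]; exact h2
    obtain ⟨a, b, hab, habinj⟩ := pairsel (α := {i : Fin n // s₁ ≤ (i : ℕ)}) F₂
      (by rwa [card_filter_lt_fin hs₂])
    obtain ⟨c, d, hcd, hcdinj⟩ := pairsel (α := {j : Fin m // s₂ ≤ (j : ℕ)}) F₁
      (by rwa [card_filter_lt_fin hs₁])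
    -- walks
    let W₁ : ∀ i : {i : Fin n // s₁ ≤ (i : ℕ)}, (G).Walk (inr (a i)) (inr (b i)) :=
      fun i => (Walk.nil.cons (adj_lr i.1 (b i))).cons (adj_rl (a i) i.1)
    let W₂ : ∀ j : {j : Fin m // s₂ ≤ (j : ℕ)}, (G).Walk (inl (c j)) (inl (d j)) :=
      fun j => (Walk.nil.cons (adj_rl j.1 (d j))).cons (adj_lr (c j) j.1)
    set P : Set ((u : Fin n ⊕ Fin m) × (v : Fin n ⊕ Fin m) × (G).Walk u v) :=
      {q | (∃ v ∈ (Fs : Set (Fin n ⊕ Fin m)), q = ⟨v, v, Walk.nil⟩) ∨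
        (∃ i : {i : Fin n // s₁ ≤ (i : ℕ)}, q = ⟨inr (a i), inr (b i), W₁ i⟩) ∨
        (∃ j : {j : Fin m // s₂ ≤ (j : ℕ)}, q = ⟨inl (c j), inl (d j), W₂ j⟩)} with hP
    have hmemS : ∀ x : Fin n ⊕ Fin m, x ∈ (Fs : Set (Fin n ⊕ Fin m)) ↔
        (∃ i : Fin n, x = inl i ∧ (i : ℕ) < s₁) ∨ (∃ j : Fin m, x = inr j ∧ (j : ℕ) < s₂) := by
      intro x
      simp only [Finset.coe_union, Finset.coe_image, Set.mem_union, Set.mem_image,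
        Finset.mem_coe, hFs, hF₁, hF₂, Finset.mem_filter, Finset.mem_univ, true_and]
      constructor
      · rintro (⟨i, hi, rfl⟩ | ⟨j, hj, rfl⟩)
        · exact Or.inl ⟨i, rfl, hi⟩
        · exact Or.inr ⟨j, rfl, hj⟩
      · rintro (⟨i, rfl, hi⟩ | ⟨j, rfl, hj⟩)
        · exact Or.inl ⟨i, hi, rfl⟩
        · exact Or.inr ⟨j, hj, rfl⟩
    refine ⟨P, ⟨?_, ?_⟩, ?_⟩
    · rintro q (⟨v, hv, rfl⟩ | ⟨i, rfl⟩ | ⟨j, rfl⟩)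
      · exact ⟨hv, hv, Walk.IsPath.nil, by simp [SimpleGraph.dist_self]⟩
      · refine ⟨?_, ?_, ?_, ?_⟩
        · exact (hmemS _).mpr (Or.inr ⟨a i, rfl, by
            have := (hab i).2.1; simp only [hF₂, Finset.mem_filter] at this; exact this.2⟩)
        · exact (hmemS _).mpr (Or.inr ⟨b i, rfl, by
            have := (hab i).2.2; simp only [hF₂, Finset.mem_filter] at this; exact this.2⟩)
        · show ((Walk.nil.cons (adj_lr i.1 (b i))).cons (adj_rl (a i) i.1)).IsPath
          rw [Walk.isPath_def]
          simp only [Walk.support_cons, Walk.support_nil]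
          simp [List.nodup_cons, (hab i).1.ne]
        · show ((Walk.nil.cons (adj_lr i.1 (b i))).cons (adj_rl (a i) i.1)).length = _
          rw [dist_rr hn hm (hab i).1.ne]
          simp
      · refine ⟨?_, ?_, ?_, ?_⟩
        · exact (hmemS _).mpr (Or.inl ⟨c j, rfl, by
            have := (hcd j).2.1; simp only [hF₁, Finset.mem_filter] at this; exact this.2⟩)
        · exact (hmemS _).mpr (Or.inl ⟨d j, rfl, by
            have := (hcd j).2.2; simp only [hF₁, Finset.mem_filter] at this; exact this.2⟩)
        · show ((Walk.nil.cons (adj_rl j.1 (d j))).cons (adj_lr (c j) j.1)).IsPath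
          rw [Walk.isPath_def]
          simp only [Walk.support_cons, Walk.support_nil]
          simp [List.nodup_cons, (hcd j).1.ne]
        · show ((Walk.nil.cons (adj_rl j.1 (d j))).cons (adj_lr (c j) j.1)).length = _
          rw [dist_ll hn hm (hcd j).1.ne]
          simp
    · rintro q (⟨v, hv, rfl⟩ | ⟨i, rfl⟩ | ⟨j, rfl⟩) q' (⟨v', hv', rfl⟩ | ⟨i', rfl⟩ | ⟨j', rfl⟩)
      · constructor
        · rintro ⟨h₁, h₂⟩
          obtain rfl : v = v' := h₁
          rfl
        · rintro ⟨h₁, h₂⟩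
          obtain rfl : v = v' := h₁
          simp
      · constructor
        · rintro ⟨h₁, h₂⟩
          exact absurd (h₁.symm.trans h₂) (by simp [(hab i').1.ne])
        · rintro ⟨h₁, h₂⟩
          exact absurd (h₂.symm.trans h₁) (by simp [(hab i').1.ne])
      · constructor
        · rintro ⟨h₁, h₂⟩
          exact absurd (h₁.symm.trans h₂) (by simp [(hcd j').1.ne])
        · rintro ⟨h₁, h₂⟩
          exact absurd (h₂.symm.trans h₁) (by simp [(hcd j').1.ne])
      · constructor
        · rintro ⟨h₁, h₂⟩
          exact absurd (h₁.trans h₂.symm) (by simp [(hab i).1.ne])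
        · rintro ⟨h₁, h₂⟩
          exact absurd (h₁.trans h₂.symm) (by simp [(hab i).1.ne])
      · constructor
        · rintro ⟨h₁, h₂⟩
          obtain rfl : i = i' := habinj _ _ (inr_injective h₁) (inr_injective h₂)
          rfl
        · rintro ⟨h₁, h₂⟩
          have e₁ : a i = b i' := inr_injective h₁
          have e₂ : b i = a i' := inr_injective h₂
          exact absurd rfl (((hab i).1.trans (e₂ ▸ (e₁ ▸ (hab i').1))).ne)
      · refine ⟨?_, ?_⟩ <;> (rintro ⟨h₁, h₂⟩; exact absurd h₁ (by simp))
      · constructor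
        · rintro ⟨h₁, h₂⟩
          exact absurd (h₁.trans h₂.symm) (by simp [(hcd j).1.ne])
        · rintro ⟨h₁, h₂⟩
          exact absurd (h₁.trans h₂.symm) (by simp [(hcd j).1.ne])
      · refine ⟨?_, ?_⟩ <;> (rintro ⟨h₁, h₂⟩; exact absurd h₁ (by simp))
      · constructor
        · rintro ⟨h₁, h₂⟩
          obtain rfl : j = j' := hcdinj _ _ (inl_injective h₁) (inl_injective h₂)
          rfl
        · rintro ⟨h₁, h₂⟩
          have e₁ : c j = d j' := inl_injective h₁
          have e₂ : d j = c j' := inl_injective h₂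
          exact absurd rfl (((hcd j).1.trans (e₂ ▸ (e₁ ▸ (hcd j').1))).ne)
    · intro w
      cases w with
      | inl i =>
        by_cases hi : (i : ℕ) < s₁
        · exact ⟨⟨inl i, inl i, Walk.nil⟩, Or.inl ⟨inl i, (hmemS _).mpr (Or.inl ⟨i, rfl, hi⟩), rfl⟩,
            by simp⟩
        · refine ⟨⟨inr (a ⟨i, le_of_not_gt hi⟩), inr (b ⟨i, le_of_not_gt hi⟩),
            W₁ ⟨i, le_of_not_gt hi⟩⟩, Or.inr (Or.inl ⟨⟨i, le_of_not_gt hi⟩, rfl⟩), ?_⟩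
          show inl i ∈ ((Walk.nil.cons _).cons _).support
          simp [Walk.support_cons]
      | inr j =>
        by_cases hj : (j : ℕ) < s₂
        · exact ⟨⟨inr j, inr j, Walk.nil⟩, Or.inl ⟨inr j, (hmemS _).mpr (Or.inr ⟨j, rfl, hj⟩), rfl⟩,
            by simp⟩
        · refine ⟨⟨inl (c ⟨j, le_of_not_gt hj⟩), inl (d ⟨j, le_of_not_gt hj⟩),
            W₂ ⟨j, le_of_not_gt hj⟩⟩, Or.inr (Or.inr ⟨⟨j, le_of_not_gt hj⟩, rfl⟩), ?_⟩
          show inr j ∈ ((Walk.nil.cons _).cons _).support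
          simp [Walk.support_cons]

lemma sgs_feasible (hn : 0 < n) (hm : 0 < m) (S : Set (Fin n ⊕ Fin m))
    (hS : IsStrongGeodeticSet G S) :
    ∃ s₁ s₂ : ℕ, s₁ ≤ n ∧ s₂ ≤ m ∧ n - s₁ ≤ s₂.choose 2 ∧ m - s₂ ≤ s₁.choose 2 ∧
      S.ncard = s₁ + s₂ := by
  classical
  obtain ⟨P, ⟨hP1, hP2⟩, hcov⟩ := hS
  set S₁ : Finset (Fin n) := Finset.univ.filter (fun i => inl i ∈ S) with hS₁
  set S₂ : Finset (Fin m) := Finset.univ.filter (fun j => inr j ∈ S) with hS₂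
  have hmid : ∀ w : Fin n ⊕ Fin m, w ∉ S → ∃ u v : Fin n ⊕ Fin m, u ∈ S ∧ v ∈ S ∧ u ≠ v ∧
      (G).Adj u w ∧ (G).Adj w v ∧
      ∃ p : (G).Walk u v,
        (⟨u, v, p⟩ : (u : Fin n ⊕ Fin m) × (v : Fin n ⊕ Fin m) × (G).Walk u v) ∈ P ∧
        p.support = [u, w, v] := by
    intro w hw
    obtain ⟨q, hq, hwq⟩ := hcov w
    obtain ⟨u, v, p⟩ := q
    obtain ⟨hq1, hq2, hpath, hlen⟩ := hP1 _ hq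
    simp only at hq1 hq2 hpath hlen hwq
    have hle : p.length ≤ 2 := by rw [hlen]; exact dist_le_two hn hm _ _
    rcases walk_support_cases p hle with h | h | ⟨x, h, ha1, ha2⟩
    · rw [h] at hwq
      simp only [List.mem_singleton] at hwq
      exact absurd (hwq ▸ hq1) hw
    · rw [h] at hwq
      simp only [List.mem_cons, List.mem_singleton, List.not_mem_nil, or_false] at hwq
      rcases hwq with rfl | rfl
      · exact absurd hq1 hw
      · exact absurd hq2 hw
    · rw [h] at hwq
      simp only [List.mem_cons, List.mem_singleton, List.not_mem_nil, or_false] at hwq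
      rcases hwq with rfl | rfl | rfl
      · exact absurd hq1 hw
      · refine ⟨u, v, hq1, hq2, ?_, ha1, ha2, p, hq, h⟩
        have hlen2 : p.length = 2 := by
          have hc := congrArg List.length h
          rw [SimpleGraph.Walk.length_support] at hc
          simp at hc
          omega
        have hd : (G).dist u v = 2 := hlen.symm.trans hlen2
        intro heq
        rw [heq, SimpleGraph.dist_self] at hd
        exact absurd hd (by norm_num)
      · exact absurd hq2 hw
  have keyL : ∀ i : Fin n, inl i ∉ S → ∃ a b : Fin m, a ≠ b ∧ a ∈ S₂ ∧ b ∈ S₂ ∧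
      ∃ p : (G).Walk (inr a) (inr b),
        (⟨inr a, inr b, p⟩ : (u : Fin n ⊕ Fin m) × (v : Fin n ⊕ Fin m) × (G).Walk u v) ∈ P ∧
        p.support = [inr a, inl i, inr b] := by
    intro i hi
    obtain ⟨u, v, hu1, hv1, hne, ha1, ha2, p, hqP, hsup⟩ := hmid (inl i) hi
    rcases u with i' | a
    · simp at ha1
    rcases v with i' | b
    · simp at ha2
    have hab : a ≠ b := fun h => hne (by rw [h])
    have haS : a ∈ S₂ := by rw [hS₂, Finset.mem_filter]; exact ⟨Finset.mem_univ _, hu1⟩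
    have hbS : b ∈ S₂ := by rw [hS₂, Finset.mem_filter]; exact ⟨Finset.mem_univ _, hv1⟩
    exact ⟨a, b, hab, haS, hbS, p, hqP, hsup⟩
  have keyR : ∀ j : Fin m, inr j ∉ S → ∃ a b : Fin n, a ≠ b ∧ a ∈ S₁ ∧ b ∈ S₁ ∧
      ∃ p : (G).Walk (inl a) (inl b),
        (⟨inl a, inl b, p⟩ : (u : Fin n ⊕ Fin m) × (v : Fin n ⊕ Fin m) × (G).Walk u v) ∈ P ∧
        p.support = [inl a, inr j, inl b] := by
    intro j hj
    obtain ⟨u, v, hu1, hv1, hne, ha1, ha2, p, hqP, hsup⟩ := hmid (inr j) hj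
    rcases u with a | j'
    case inr => simp at ha1
    rcases v with b | j'
    case inr => simp at ha2
    have hab : a ≠ b := fun h => hne (by rw [h])
    have haS : a ∈ S₁ := by rw [hS₁, Finset.mem_filter]; exact ⟨Finset.mem_univ _, hu1⟩
    have hbS : b ∈ S₁ := by rw [hS₁, Finset.mem_filter]; exact ⟨Finset.mem_univ _, hv1⟩
    exact ⟨a, b, hab, haS, hbS, p, hqP, hsup⟩
  haveI : Nonempty (Fin n) := ⟨⟨0, hn⟩⟩
  haveI : Nonempty (Fin m) := ⟨⟨0, hm⟩⟩
  haveI : Nonempty ((u : Fin n ⊕ Fin m) × (v : Fin n ⊕ Fin m) × (G).Walk u v) :=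
    ⟨⟨inl ⟨0, hn⟩, inl ⟨0, hn⟩, Walk.nil⟩⟩
  choose! aL bL habL haSL hbSL pL hqPL hsupL using keyL
  choose! aR bR habR haSR hbSR pR hqPR hsupR using keyR
  refine ⟨S₁.card, S₂.card, le_trans (Finset.card_le_card (Finset.subset_univ _)) (by simp),
    le_trans (Finset.card_le_card (Finset.subset_univ _)) (by simp), ?_, ?_, ?_⟩
  · -- n - s₁ ≤ choose s₂ 2
    have hinjL : ∀ i ∈ Finset.univ \ S₁, ∀ i' ∈ Finset.univ \ S₁,
        ({aL i, bL i} : Finset (Fin m)) = {aL i', bL i'} → i = i' := by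
      intro i hi i' hi' hpair
      rw [Finset.mem_sdiff, hS₁, Finset.mem_filter] at hi hi'
      have hi2 : inl i ∉ S := fun h => hi.2 ⟨Finset.mem_univ _, h⟩
      have hi2' : inl i' ∉ S := fun h => hi'.2 ⟨Finset.mem_univ _, h⟩
      rcases pair_cases _ _ _ _ (habL i hi2) (habL i' hi2') hpair with ⟨e1, e2⟩ | ⟨e1, e2⟩
      · have heq := (hP2 _ (hqPL i hi2) _ (hqPL i' hi2')).1
          ⟨congrArg inr e1, congrArg inr e2⟩
        have hsups := congrArg (fun r : (u : Fin n ⊕ Fin m) ×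
          (v : Fin n ⊕ Fin m) × (G).Walk u v => r.2.2.support) heq
        simp only at hsups
        rw [hsupL i hi2, hsupL i' hi2'] at hsups
        simp only [List.cons.injEq, Sum.inl.injEq, Sum.inr.injEq, and_true] at hsups
        exact hsups.2.1
      · have heq := (hP2 _ (hqPL i hi2) _ (hqPL i' hi2')).2
          ⟨congrArg inr e1, congrArg inr e2⟩
        simp only at heq
        rw [hsupL i hi2, hsupL i' hi2'] at heq
        simp only [List.reverse_cons, List.reverse_nil, List.nil_append, List.cons_append,
          List.singleton_append] at heq
        simp only [List.cons.injEq, Sum.inl.injEq, Sum.inr.injEq, and_true] at heq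
        exact heq.2.1
    have hmaps : ∀ i ∈ Finset.univ \ S₁,
        ({aL i, bL i} : Finset (Fin m)) ∈ S₂.powersetCard 2 := by
      intro i hi
      rw [Finset.mem_sdiff, hS₁, Finset.mem_filter] at hi
      have hi2 : inl i ∉ S := fun h => hi.2 ⟨Finset.mem_univ _, h⟩
      rw [Finset.mem_powersetCard]
      constructor
      · intro x hx
        rw [Finset.mem_insert, Finset.mem_singleton] at hx
        rcases hx with rfl | rfl
        · exact haSL i hi2
        · exact hbSL i hi2
      · exact Finset.card_pair (habL i hi2)
    have hc := Finset.card_le_card_of_injOn (fun i => ({aL i, bL i} : Finset (Fin m)))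
      hmaps (fun x hx y hy h => hinjL x hx y hy h)
    rw [Finset.card_powersetCard, Finset.card_sdiff_of_subset (Finset.subset_univ _),
      Finset.card_univ, Fintype.card_fin] at hc
    exact hc
  · -- m - s₂ ≤ choose s₁ 2
    have hinjR : ∀ j ∈ Finset.univ \ S₂, ∀ j' ∈ Finset.univ \ S₂,
        ({aR j, bR j} : Finset (Fin n)) = {aR j', bR j'} → j = j' := by
      intro j hj j' hj' hpair
      rw [Finset.mem_sdiff, hS₂, Finset.mem_filter] at hj hj'
      have hj2 : inr j ∉ S := fun h => hj.2 ⟨Finset.mem_univ _, h⟩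
      have hj2' : inr j' ∉ S := fun h => hj'.2 ⟨Finset.mem_univ _, h⟩
      rcases pair_cases _ _ _ _ (habR j hj2) (habR j' hj2') hpair with ⟨e1, e2⟩ | ⟨e1, e2⟩
      · have heq := (hP2 _ (hqPR j hj2) _ (hqPR j' hj2')).1
          ⟨congrArg inl e1, congrArg inl e2⟩
        have hsups := congrArg (fun r : (u : Fin n ⊕ Fin m) ×
          (v : Fin n ⊕ Fin m) × (G).Walk u v => r.2.2.support) heq
        simp only at hsups
        rw [hsupR j hj2, hsupR j' hj2'] at hsups
        simp only [List.cons.injEq, Sum.inl.injEq, Sum.inr.injEq, and_true] at hsups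
        exact hsups.2.1
      · have heq := (hP2 _ (hqPR j hj2) _ (hqPR j' hj2')).2
          ⟨congrArg inl e1, congrArg inl e2⟩
        simp only at heq
        rw [hsupR j hj2, hsupR j' hj2'] at heq
        simp only [List.reverse_cons, List.reverse_nil, List.nil_append, List.cons_append,
          List.singleton_append] at heq
        simp only [List.cons.injEq, Sum.inl.injEq, Sum.inr.injEq, and_true] at heq
        exact heq.2.1
    have hmaps : ∀ j ∈ Finset.univ \ S₂,
        ({aR j, bR j} : Finset (Fin n)) ∈ S₁.powersetCard 2 := by
      intro j hj
      rw [Finset.mem_sdiff, hS₂, Finset.mem_filter] at hj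
      have hj2 : inr j ∉ S := fun h => hj.2 ⟨Finset.mem_univ _, h⟩
      rw [Finset.mem_powersetCard]
      constructor
      · intro x hx
        rw [Finset.mem_insert, Finset.mem_singleton] at hx
        rcases hx with rfl | rfl
        · exact haSR j hj2
        · exact hbSR j hj2
      · exact Finset.card_pair (habR j hj2)
    have hc := Finset.card_le_card_of_injOn (fun j => ({aR j, bR j} : Finset (Fin n)))
      hmaps (fun x hx y hy h => hinjR x hx y hy h)
    rw [Finset.card_powersetCard, Finset.card_sdiff_of_subset (Finset.subset_univ _),
      Finset.card_univ, Fintype.card_fin] at hc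
    exact hc
  · -- ncard
    have hSet : S = ((S₁.image inl ∪ S₂.image inr : Finset (Fin n ⊕ Fin m)) :
        Set (Fin n ⊕ Fin m)) := by
      ext x
      cases x with
      | inl i =>
        simp only [Finset.coe_union, Finset.coe_image, Set.mem_union, Set.mem_image,
          Finset.mem_coe, hS₁, hS₂, Finset.mem_filter, Finset.mem_univ, true_and]
        constructor
        · intro h
          exact Or.inl ⟨i, h, rfl⟩
        · rintro (⟨i', h, he⟩ | ⟨j', h, he⟩)
          · exact (inl_injective he) ▸ h
          · exact absurd he (by simp)
      | inr j =>
        simp only [Finset.coe_union, Finset.coe_image, Set.mem_union, Set.mem_image,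
          Finset.mem_coe, hS₁, hS₂, Finset.mem_filter, Finset.mem_univ, true_and]
        constructor
        · intro h
          exact Or.inr ⟨j, h, rfl⟩
        · rintro (⟨i', h, he⟩ | ⟨j', h, he⟩)
          · exact absurd he (by simp)
          · exact (inr_injective he) ▸ h
    rw [hSet, Set.ncard_coe_finset, Finset.card_union_of_disjoint,
      Finset.card_image_of_injective _ inl_injective,
      Finset.card_image_of_injective _ inr_injective]
    rw [Finset.disjoint_left]
    rintro x hx hx'
    simp only [Finset.mem_image] at hx hx'
    obtain ⟨i, -, rfl⟩ := hx
    obtain ⟨j, -, h⟩ := hx'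
    exact (inr_ne_inl h)

end main

lemma univ_sgs {V : Type*} (G : SimpleGraph V) : IsStrongGeodeticSet G Set.univ := by
  refine ⟨{q | ∃ v, q = ⟨v, v, SimpleGraph.Walk.nil⟩}, ⟨?_, ?_⟩, ?_⟩
  · rintro q ⟨v, rfl⟩
    exact ⟨trivial, trivial, SimpleGraph.Walk.IsPath.nil, by simp [SimpleGraph.dist_self]⟩
  · rintro q ⟨v, rfl⟩ q' ⟨v', rfl⟩
    constructor
    · rintro ⟨h₁, h₂⟩
      obtain rfl : v = v' := h₁
      rfl
    · rintro ⟨h₁, h₂⟩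
      obtain rfl : v = v' := h₁
      simp
  · intro w
    exact ⟨⟨w, w, SimpleGraph.Walk.nil⟩, ⟨w, rfl⟩, by simp⟩

theorem sg_optimization (n m : ℕ) (hn : 0 < n) (hm : 0 < m) :
    (∀ k : ℕ, k ≤ strongGeodeticNumber (completeBipartiteGraph (Fin n) (Fin m)) →
      ¬ ∃ s₁ s₂ : ℕ, s₁ ≤ n ∧ s₂ ≤ m ∧ s₁ + s₂ < k ∧
          n - s₁ ≤ s₂.choose 2 ∧ m - s₂ ≤ s₁.choose 2) ∧
    (¬ (n = 1 ∧ m = 1) → ¬ (n = 2 ∧ m = 2) →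
      strongGeodeticNumber (completeBipartiteGraph (Fin n) (Fin m)) =
        sInf {t : ℕ | ∃ s₁ s₂ : ℕ, s₁ ≤ n ∧ s₂ ≤ m ∧
          n - s₁ ≤ s₂.choose 2 ∧ m - s₂ ≤ s₁.choose 2 ∧ t = s₁ + s₂}) := by
  have hAmem : ∀ {s₁ s₂ : ℕ}, s₁ ≤ n → s₂ ≤ m → n - s₁ ≤ s₂.choose 2 → m - s₂ ≤ s₁.choose 2 →
      strongGeodeticNumber (completeBipartiteGraph (Fin n) (Fin m)) ≤ s₁ + s₂ := by
    intro s₁ s₂ h₁ h₂ hc1 hc2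
    obtain ⟨S, hcard, hsgs⟩ := exists_sgs hn hm h₁ h₂ hc1 hc2
    exact Nat.sInf_le ⟨S, hcard, hsgs⟩
  constructor
  · rintro k hk ⟨s₁, s₂, h₁, h₂, hlt, hc1, hc2⟩
    have hle := hAmem h₁ h₂ hc1 hc2
    omega
  · intro _ _
    apply le_antisymm
    · refine le_csInf ⟨n + m, n, m, le_refl _, le_refl _, by simp, by simp, rfl⟩ ?_
      rintro t ⟨s₁, s₂, h₁, h₂, hc1, hc2, rfl⟩
      exact hAmem h₁ h₂ hc1 hc2
    · have hA : ∃ k, k ∈ {k | ∃ S : Set (Fin n ⊕ Fin m), S.ncard = k ∧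
          IsStrongGeodeticSet (completeBipartiteGraph (Fin n) (Fin m)) S} :=
        ⟨(Set.univ : Set (Fin n ⊕ Fin m)).ncard, Set.univ, rfl, univ_sgs _⟩
      have hmem := Nat.sInf_mem hA
      obtain ⟨S, hcard, hsgs⟩ := hmem
      obtain ⟨s₁, s₂, h₁, h₂, hc1, hc2, hsum⟩ := sgs_feasible hn hm S hsgs
      exact Nat.sInf_le ⟨s₁, s₂, h₁, h₂, hc1, hc2, (hcard.symm.trans hsum)⟩
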